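/- If 𝒯 admits fair valuations for binary sets, then 𝒯 is identified. -/

import Mathlib

open MeasureTheory Set

section Defs

variable {Θ : Type*} [Fintype Θ]

/-- The value function `v_A(s) = max_{a ∈ A} ∑_θ a(θ) s(θ)`. -/
noncomputable def valueFn (A : Set (Θ → ℝ)) (s : Θ → ℝ) : ℝ :=
  sSup ((fun a => ∑ θ, a θ * s θ) '' A)

/-- A binary set: one or two elements. -/
def Binary (A : Set (Θ → ℝ)) : Prop := A.ncard = 1 ∨ A.ncard = 2

/-- An information structure on `S`: a Borel probability measure supported on `S`. -/
def IsInfoStructure (S : Set (Θ → ℝ)) (π : Measure (Θ → ℝ)) : Prop :=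
  IsProbabilityMeasure π ∧ π Sᶜ = 0

/-- The skill distribution `p_π(θ) = ∫_S s(θ) dπ(s)` induced by `π`. -/
noncomputable def skillDist (S : Set (Θ → ℝ)) (π : Measure (Θ → ℝ)) : Θ → ℝ :=
  fun θ => ∫ s in S, s θ ∂π

/-- `S` is non-discriminatory. -/
def NonDiscriminatory (S : Set (Θ → ℝ)) : Prop :=
  ∀ π π' : Measure (Θ → ℝ), IsInfoStructure S π → IsInfoStructure S π' →
    ∀ A : Set (Θ → ℝ), A.Finite → A.Nonempty →
      skillDist S π = skillDist S π' →
      ∫ t in S, valueFn A t ∂π = ∫ t in S, valueFn A t ∂π'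

/-- `S` is non-discriminatory for binary sets. -/
def NonDiscriminatoryBinary (S : Set (Θ → ℝ)) : Prop :=
  ∀ π π' : Measure (Θ → ℝ), IsInfoStructure S π → IsInfoStructure S π' →
    ∀ A : Set (Θ → ℝ), Binary A →
      skillDist S π = skillDist S π' →
      ∫ t in S, valueFn A t ∂π = ∫ t in S, valueFn A t ∂π'

/-- `S` is identified. -/
def Identified (S : Set (Θ → ℝ)) : Prop :=
  ∀ π π' : Measure (Θ → ℝ), IsInfoStructure S π → IsInfoStructure S π' →
    skillDist S π = skillDist S π' → π = π'

/-- `S` admits fair valuations. -/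
def FairValuations (S : Set (Θ → ℝ)) : Prop :=
  ∀ A : Set (Θ → ℝ), A.Finite → A.Nonempty →
    ∃ α : Θ → ℝ, ∀ t ∈ S, valueFn A t = ∑ θ, α θ * t θ

/-- `S` admits fair valuations for binary sets. -/
def FairValuationsBinary (S : Set (Θ → ℝ)) : Prop :=
  ∀ A : Set (Θ → ℝ), Binary A →
    ∃ α : Θ → ℝ, ∀ t ∈ S, valueFn A t = ∑ θ, α θ * t θ

/-- `W_A(p)`: value of optimal information design with skill distribution `p`,
over information structures on `S`. -/
noncomputable def Wfn (A S : Set (Θ → ℝ)) (p : Θ → ℝ) : ℝ :=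
  sSup {x | ∃ π : Measure (Θ → ℝ), IsInfoStructure S π ∧ skillDist S π = p ∧
    x = ∫ t in S, valueFn A t ∂π}

/-- A function is affine on `T`. -/
def AffineOnSet (W : (Θ → ℝ) → ℝ) (T : Set (Θ → ℝ)) : Prop :=
  ∀ p ∈ T, ∀ q ∈ T, ∀ γ : ℝ, 0 ≤ γ → γ ≤ 1 →
    W (γ • p + (1 - γ) • q) = γ * W p + (1 - γ) * W q

end Defs

section Aux

variable {Θ : Type*} [Fintype Θ]

lemma valueFn_pair (a b s : Θ → ℝ) :
    valueFn {a, b} s = max (∑ θ, a θ * s θ) (∑ θ, b θ * s θ) := by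
  rw [valueFn, Set.image_pair, csSup_pair]

lemma binary_pair (a b : Θ → ℝ) : Binary ({a, b} : Set (Θ → ℝ)) := by
  by_cases h : a = b
  · subst h; left; simp [Set.pair_eq_singleton]
  · right; exact Set.ncard_pair h

lemma max_lin {𝒯 : Set (Θ → ℝ)} (hfv : FairValuationsBinary 𝒯) (a b : Θ → ℝ) :
    ∃ γ : Θ → ℝ, ∀ t ∈ 𝒯, max (∑ θ, a θ * t θ) (∑ θ, b θ * t θ) = ∑ θ, γ θ * t θ := by
  obtain ⟨γ, hγ⟩ := hfv {a, b} (binary_pair a b)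
  exact ⟨γ, fun t ht => by rw [← valueFn_pair]; exact hγ t ht⟩

/-- The linear function with coefficients `α`, restricted to `𝒯`, as a continuous map. -/
noncomputable def linC (𝒯 : Set (Θ → ℝ)) (α : Θ → ℝ) : C(𝒯, ℝ) :=
  ⟨fun t => ∑ θ, α θ * (t : Θ → ℝ) θ,
    continuous_finset_sum _ fun θ _ =>
      continuous_const.mul ((continuous_apply θ).comp continuous_subtype_val)⟩

/-- Approximation of continuous functions on `𝒯` by linear functions, via
Stone–Weierstrass (lattice version): the linear functions form a sublattice because
of fair valuations for binary sets, and they separate points strongly. -/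
lemma approx_lin {𝒯 : Set (Θ → ℝ)} (h𝒯 : 𝒯 ⊆ stdSimplex ℝ Θ) (h𝒯c : IsClosed 𝒯)
    (hfv : FairValuationsBinary 𝒯) (g : (Θ → ℝ) → ℝ) (hg : Continuous g)
    {ε : ℝ} (hε : 0 < ε) :
    ∃ α : Θ → ℝ, ∀ t ∈ 𝒯, |g t - ∑ θ, α θ * t θ| ≤ ε := by
  classical
  haveI : CompactSpace 𝒯 :=
    isCompact_iff_compactSpace.mp ((isCompact_stdSimplex ℝ Θ).of_isClosed_subset h𝒯c h𝒯)
  set V : Set C(𝒯, ℝ) := {f | ∃ α : Θ → ℝ, ∀ t : 𝒯, f t = ∑ θ, α θ * (t : Θ → ℝ) θ} with hV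
  have sum_one : ∀ t : 𝒯, ∑ θ, (t : Θ → ℝ) θ = 1 := fun t => (h𝒯 t.2).2
  have hVtop : closure V = ⊤ := by
    apply ContinuousMap.sublattice_closure_eq_top V
    · exact ⟨linC 𝒯 0, 0, fun t => rfl⟩
    · -- inf_mem
      rintro f ⟨α, hα⟩ g ⟨β, hβ⟩
      obtain ⟨γ, hγ⟩ := max_lin hfv (-α) (-β)
      refine ⟨-γ, fun t => ?_⟩
      have h1 := hγ (t : Θ → ℝ) t.2
      have e1 : ∑ θ, (-α) θ * (t : Θ → ℝ) θ = -∑ θ, α θ * (t : Θ → ℝ) θ := by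
        simp [neg_mul, Finset.sum_neg_distrib]
      have e2 : ∑ θ, (-β) θ * (t : Θ → ℝ) θ = -∑ θ, β θ * (t : Θ → ℝ) θ := by
        simp [neg_mul, Finset.sum_neg_distrib]
      have e3 : ∑ θ, (-γ) θ * (t : Θ → ℝ) θ = -∑ θ, γ θ * (t : Θ → ℝ) θ := by
        simp [neg_mul, Finset.sum_neg_distrib]
      rw [e1, e2] at h1
      have : min (∑ θ, α θ * (t : Θ → ℝ) θ) (∑ θ, β θ * (t : Θ → ℝ) θ)
          = -∑ θ, γ θ * (t : Θ → ℝ) θ := by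
        rw [← h1, max_neg_neg, neg_neg]
      rw [ContinuousMap.inf_apply, hα t, hβ t, this, e3]
    · -- sup_mem
      rintro f ⟨α, hα⟩ g ⟨β, hβ⟩
      obtain ⟨γ, hγ⟩ := max_lin hfv α β
      refine ⟨γ, fun t => ?_⟩
      rw [ContinuousMap.sup_apply, hα t, hβ t, hγ (t : Θ → ℝ) t.2]
    · -- separates points strongly
      intro v x y
      by_cases hxy : x = y
      · subst hxy
        refine ⟨linC 𝒯 (fun _ => v x), ⟨fun _ => v x, fun t => rfl⟩, ?_, ?_⟩ <;>
          simp [linC, ← Finset.mul_sum, sum_one]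
      · have hxy' : (x : Θ → ℝ) ≠ (y : Θ → ℝ) := fun h => hxy (Subtype.ext h)
        obtain ⟨θ₀, hθ₀⟩ := Function.ne_iff.mp hxy'
        set c : ℝ := (v x - v y) / ((x : Θ → ℝ) θ₀ - (y : Θ → ℝ) θ₀) with hc
        set d : ℝ := v x - c * (x : Θ → ℝ) θ₀ with hd
        set α : Θ → ℝ := fun θ => (if θ = θ₀ then c else 0) + d with hα
        have hval : ∀ t : 𝒯, linC 𝒯 α t = c * (t : Θ → ℝ) θ₀ + d := by
          intro t
          show ∑ θ, ((if θ = θ₀ then c else 0) + d) * (t : Θ → ℝ) θ = _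
          have : ∀ θ, ((if θ = θ₀ then c else 0) + d) * (t : Θ → ℝ) θ
              = (if θ = θ₀ then c * (t : Θ → ℝ) θ else 0) + d * (t : Θ → ℝ) θ := by
            intro θ; by_cases h : θ = θ₀ <;> simp [h, add_mul]
          rw [Finset.sum_congr rfl fun θ _ => this θ, Finset.sum_add_distrib,
            Finset.sum_ite_eq' Finset.univ θ₀, ← Finset.mul_sum, sum_one t]
          simp
        have hsub : (x : Θ → ℝ) θ₀ - (y : Θ → ℝ) θ₀ ≠ 0 := sub_ne_zero_of_ne hθ₀
        refine ⟨linC 𝒯 α, ⟨α, fun t => rfl⟩, ?_, ?_⟩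
        · rw [hval x, hd]; ring
        · rw [hval y, hd, hc]; field_simp; ring
  -- use density
  set gC : C(𝒯, ℝ) := ⟨fun t => g t, hg.comp continuous_subtype_val⟩ with hgC
  have : gC ∈ closure V := by rw [hVtop]; trivial
  obtain ⟨f, hfV, hdist⟩ := Metric.mem_closure_iff.mp this ε hε
  obtain ⟨α, hα⟩ := hfV
  refine ⟨α, fun t ht => ?_⟩
  have h1 : dist (gC ⟨t, ht⟩) (f ⟨t, ht⟩) ≤ dist gC f := ContinuousMap.dist_apply_le_dist _
  rw [Real.dist_eq] at h1
  have : gC ⟨t, ht⟩ = g t := rfl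
  rw [this, hα ⟨t, ht⟩] at h1
  exact h1.trans hdist.le

end Aux

variable {Θ : Type*} [Fintype Θ] [Nonempty Θ]

theorem stmt6 (𝒯 : Set (Θ → ℝ)) (h𝒯 : 𝒯 ⊆ stdSimplex ℝ Θ) (h𝒯c : IsClosed 𝒯)
    (hfv : FairValuationsBinary 𝒯) : Identified 𝒯 := by
  intro π π' hπ hπ' hps
  haveI hPπ : IsProbabilityMeasure π := hπ.1
  haveI hPπ' : IsProbabilityMeasure π' := hπ'.1
  have hTcomp : IsCompact 𝒯 := (isCompact_stdSimplex ℝ Θ).of_isClosed_subset h𝒯c h𝒯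
  have hres : π.restrict 𝒯 = π :=
    Measure.restrict_eq_self_of_ae_mem (by rw [ae_iff]; exact hπ.2)
  have hres' : π'.restrict 𝒯 = π' :=
    Measure.restrict_eq_self_of_ae_mem (by rw [ae_iff]; exact hπ'.2)
  -- integral of a linear function over 𝒯 depends only on the skill distribution
  have hint : ∀ (μ : Measure (Θ → ℝ)), IsProbabilityMeasure μ → ∀ θ : Θ,
      IntegrableOn (fun t : Θ → ℝ => t θ) 𝒯 μ := by
    intro μ hμ θ
    haveI := hμ
    exact (continuous_apply θ).continuousOn.integrableOn_compact hTcomp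
  have hlinint : ∀ (μ : Measure (Θ → ℝ)), IsProbabilityMeasure μ → ∀ (α : Θ → ℝ),
      IntegrableOn (fun t : Θ → ℝ => ∑ θ, α θ * t θ) 𝒯 μ := by
    intro μ hμ α
    haveI := hμ
    exact (continuous_finset_sum _ fun θ _ =>
      continuous_const.mul (continuous_apply θ)).continuousOn.integrableOn_compact hTcomp
  have hlin : ∀ (μ : Measure (Θ → ℝ)), IsProbabilityMeasure μ → ∀ (α : Θ → ℝ),
      ∫ t in 𝒯, (∑ θ, α θ * t θ) ∂μ = ∑ θ, α θ * skillDist 𝒯 μ θ := by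
    intro μ hμ α
    rw [integral_finset_sum Finset.univ fun θ _ => ((hint μ hμ θ).const_mul (α θ))]
    exact Finset.sum_congr rfl fun θ _ => integral_const_mul _ _
  -- key: set integrals over 𝒯 of continuous functions agree
  have key : ∀ g : (Θ → ℝ) → ℝ, Continuous g →
      ∫ t in 𝒯, g t ∂π = ∫ t in 𝒯, g t ∂π' := by
    intro g hg
    refine sub_eq_zero.mp (abs_eq_zero.mp (le_antisymm ?_ (abs_nonneg _)))
    have hmain : ∀ ε : ℝ, 0 < ε →
        |(∫ t in 𝒯, g t ∂π) - ∫ t in 𝒯, g t ∂π'| ≤ ε := by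
      intro ε hε
      obtain ⟨α, hα⟩ := approx_lin h𝒯 h𝒯c hfv g hg (half_pos hε)
      have hbound : ∀ (μ : Measure (Θ → ℝ)), IsProbabilityMeasure μ →
          |(∫ t in 𝒯, g t ∂μ) - ∑ θ, α θ * skillDist 𝒯 μ θ| ≤ ε / 2 := by
        intro μ hμ
        haveI := hμ
        rw [← hlin μ hμ α, ← integral_sub (hg.continuousOn.integrableOn_compact hTcomp)
          (hlinint μ hμ α), ← Real.norm_eq_abs]
        have h1 : ‖∫ t in 𝒯, (g t - ∑ θ, α θ * t θ) ∂μ‖ ≤ (ε / 2) * (μ 𝒯).toReal := by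
          apply norm_setIntegral_le_of_norm_le_const_ae' (measure_lt_top μ 𝒯)
          exact Filter.Eventually.of_forall fun t ht => by
            simpa [Real.norm_eq_abs] using hα t ht
        have h2 : (μ 𝒯).toReal ≤ 1 := by
          have hle : μ 𝒯 ≤ 1 := le_trans (measure_mono (Set.subset_univ 𝒯))
            (le_of_eq measure_univ)
          simpa using ENNReal.toReal_mono (by simp) hle
        have h3 : (0:ℝ) ≤ (μ 𝒯).toReal := ENNReal.toReal_nonneg
        nlinarith
      have h1 := hbound π hPπ
      have h2 := hbound π' hPπ'
      rw [hps] at h1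
      have h3 := abs_sub_le (∫ t in 𝒯, g t ∂π) (∑ θ, α θ * skillDist 𝒯 π' θ)
        (∫ t in 𝒯, g t ∂π')
      rw [abs_sub_comm (∑ θ, α θ * skillDist 𝒯 π' θ)] at h3
      linarith
    by_contra hpos
    push_neg at hpos
    linarith [hmain (|(∫ t in 𝒯, g t ∂π) - ∫ t in 𝒯, g t ∂π'| / 2) (by linarith)]
  -- conclude equality of measures via bounded continuous ℝ≥0-valued functions
  apply ext_of_forall_lintegral_eq_of_IsFiniteMeasure
  intro f
  have hfi : Integrable (fun x => (f x : ℝ)) π := f.integrable_of_nnreal π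
  have hfi' : Integrable (fun x => (f x : ℝ)) π' := f.integrable_of_nnreal π'
  rw [lintegral_coe_eq_integral f hfi, lintegral_coe_eq_integral f hfi']
  congr 1
  have hc : Continuous fun x : Θ → ℝ => (f x : ℝ) :=
    NNReal.continuous_coe.comp f.continuous
  calc ∫ x, (f x : ℝ) ∂π = ∫ x in 𝒯, (f x : ℝ) ∂π := by rw [hres]
    _ = ∫ x in 𝒯, (f x : ℝ) ∂π' := key _ hc
    _ = ∫ x, (f x : ℝ) ∂π' := by rw [hres']
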